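/- Let $G$ be an $(n,d,\lambda)$-graph and let $t$ be a positive integer with $t \ge \frac{2n (\log n)^2}{d}$. Then the number of ordered $t$-tuples $(v_1,\ldots,v_t) \in V(G)^t$ of vertices of $G$ such that no two of the $v_i$ are adjacent in $G$ is at most $\left(\frac{4 e n \lambda}{d}\right)^t$. -/

import Mathlib

open scoped Classical

namespace AlonRodl

open Finset Matrix

noncomputable section
variable {V : Type*} [Fintype V] [DecidableEq V] (G : SimpleGraph V) [DecidableRel G.Adj]

/-- The connected component of `v` as a finset. -/
def K (v : V) : Finset V := Finset.univ.filter fun u => G.Reachable v u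

/-- 0/1 indicator vector of a finset. -/
def ind (S : Finset V) : V → ℝ := fun v => if v ∈ S then 1 else 0

/-- number of (ordered) edges between two finsets. -/
def ec (Z Y : Finset V) : ℝ := ∑ u ∈ Z, ∑ w ∈ Y, if G.Adj u w then (1:ℝ) else 0

lemma mem_K {v u : V} : u ∈ K G v ↔ G.Reachable v u := by simp [K]

lemma self_mem_K (v : V) : v ∈ K G v := by simp [K, SimpleGraph.Reachable.refl]

lemma K_eq_of_mem {v u : V} (h : u ∈ K G v) : K G u = K G v := by
  ext w; simp only [mem_K] at *
  exact ⟨fun hw => h.trans hw, fun hw => h.symm.trans hw⟩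

lemma adj_mem_K {v u w : V} (h : u ∈ K G v) (ha : G.Adj u w) : w ∈ K G v := by
  rw [mem_K] at *; exact h.trans ha.reachable

lemma neighborFinset_subset_K (v : V) : G.neighborFinset v ⊆ K G v := by
  intro u hu; rw [SimpleGraph.mem_neighborFinset] at hu
  exact adj_mem_K G (self_mem_K G v) hu

lemma card_K_pos (v : V) : 0 < (K G v).card :=
  Finset.card_pos.2 ⟨v, self_mem_K G v⟩

lemma d_lt_card_K {d : ℕ} (hreg : ∀ v, G.degree v = d) (v : V) :
    d + 1 ≤ (K G v).card := by
  have h : insert v (G.neighborFinset v) ⊆ K G v := by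
    intro u hu
    rcases Finset.mem_insert.1 hu with rfl | hu
    · exact self_mem_K G _
    · exact neighborFinset_subset_K G v hu
  have h2 := Finset.card_le_card h
  have h3 : (insert v (G.neighborFinset v)).card = d + 1 := by
    rw [Finset.card_insert_of_notMem (by simp), SimpleGraph.card_neighborFinset_eq_degree,
      hreg v]
  omega

lemma ind_dot_ind {S T : Finset V} : ind S ⬝ᵥ ind T = ((S ∩ T).card : ℝ) := by
  have h : ∀ v : V, (if v ∈ S then (1:ℝ) else 0) * (if v ∈ T then 1 else 0)
      = if v ∈ S ∩ T then 1 else 0 := by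
    intro v; by_cases h1 : v ∈ S <;> by_cases h2 : v ∈ T <;> simp [h1, h2]
  simp only [dotProduct, ind, h, Finset.sum_ite_mem, Finset.univ_inter, Finset.sum_const,
    nsmul_eq_mul, mul_one]

lemma adjMatrix_mulVec_ind (S : Finset V) (u : V) :
    (G.adjMatrix ℝ *ᵥ ind S) u = ((S.filter (fun w => G.Adj u w)).card : ℝ) := by
  rw [SimpleGraph.adjMatrix_mulVec_apply]
  have hi : ∀ w, ind S w = if w ∈ S then (1:ℝ) else 0 := fun _ => rfl
  simp only [hi, Finset.sum_ite_mem, Finset.sum_const, nsmul_eq_mul, mul_one]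
  have h2 : G.neighborFinset u ∩ S = S.filter (fun w => G.Adj u w) := by
    ext w; simp [SimpleGraph.mem_neighborFinset, and_comm]
  rw [h2]

lemma mulVec_ind_K {d : ℕ} (hreg : ∀ v, G.degree v = d) (v : V) :
    G.adjMatrix ℝ *ᵥ ind (K G v) = (d : ℝ) • ind (K G v) := by
  funext u
  rw [adjMatrix_mulVec_ind]
  by_cases hu : u ∈ K G v
  · have : (K G v).filter (fun w => G.Adj u w) = G.neighborFinset u := by
      ext w; simp only [Finset.mem_filter, SimpleGraph.mem_neighborFinset]
      exact ⟨fun h => h.2, fun h => ⟨adj_mem_K G hu h, h⟩⟩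
    simp [this, ind, hu, hreg u]
  · have : (K G v).filter (fun w => G.Adj u w) = ∅ := by
      ext w; simp only [Finset.mem_filter, Finset.notMem_empty, iff_false, not_and]
      intro hw ha
      exact hu (adj_mem_K G hw ha.symm)
    simp [this, ind, hu]

lemma isHermitian_adj : (G.adjMatrix ℝ).IsHermitian := by
  rw [Matrix.IsHermitian, conjTranspose_eq_transpose_of_trivial]
  exact G.isSymm_adjMatrix

lemma eig_const {d : ℕ} (hreg : ∀ v, G.degree v = d) (w : V → ℝ)
    (hw : G.adjMatrix ℝ *ᵥ w = (d : ℝ) • w) {i j : V} (hij : G.Reachable i j) :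
    w i = w j := by
  have hlap : Matrix.toLin' (G.lapMatrix ℝ) w = 0 := by
    rw [Matrix.toLin'_apply]
    funext u
    rw [SimpleGraph.lapMatrix_mulVec_apply]
    have h1 := congrFun hw u
    rw [SimpleGraph.adjMatrix_mulVec_apply] at h1
    rw [h1, hreg u]
    simp
  exact (SimpleGraph.lapMatrix_mulVec_eq_zero_iff_forall_reachable (G := G)).1 hlap i j hij

lemma spectral {d : ℕ} {lam : ℝ}
    (hspec : ∀ μ ∈ spectrum ℝ (G.adjMatrix ℝ), μ ≠ (d : ℝ) → |μ| ≤ lam)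
    (x y : V → ℝ)
    (hx : ∀ w : V → ℝ, G.adjMatrix ℝ *ᵥ w = (d : ℝ) • w → x ⬝ᵥ w = 0)
    (hy : ∀ w : V → ℝ, G.adjMatrix ℝ *ᵥ w = (d : ℝ) • w → y ⬝ᵥ w = 0) :
    |x ⬝ᵥ (G.adjMatrix ℝ *ᵥ y)| ≤ lam * Real.sqrt (x ⬝ᵥ x) * Real.sqrt (y ⬝ᵥ y) := by
  have hA : (G.adjMatrix ℝ).IsHermitian := isHermitian_adj G
  set A := G.adjMatrix ℝ with hAdef
  set U : Matrix V V ℝ := (hA.eigenvectorUnitary : Matrix V V ℝ) with hU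
  set p : V → ℝ := star U *ᵥ x with hp
  set q : V → ℝ := star U *ᵥ y with hq
  have hμ : True := trivial
  have hUU : U * star U = 1 := (Matrix.mem_unitaryGroup_iff).mp hA.eigenvectorUnitary.2
  have hUU' : star U * U = 1 := Unitary.coe_star_mul_self hA.eigenvectorUnitary
  -- coefficients as dot products with eigenvectors
  have hpc : ∀ i, p i = x ⬝ᵥ ⇑(hA.eigenvectorBasis i) := by
    intro i
    simp only [hp, Matrix.mulVec, dotProduct, Matrix.star_apply, star_trivial]
    exact Finset.sum_congr rfl fun j _ => by rw [mul_comm]; rfl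
  have hqc : ∀ i, q i = y ⬝ᵥ ⇑(hA.eigenvectorBasis i) := by
    intro i
    simp only [hq, Matrix.mulVec, dotProduct, Matrix.star_apply, star_trivial]
    exact Finset.sum_congr rfl fun j _ => by rw [mul_comm]; rfl
  -- expansion
  have hexp : x ⬝ᵥ (A *ᵥ y) = ∑ i : V, hA.eigenvalues i * (p i * q i) := by
    conv_lhs => rw [hA.spectral_theorem]
    rw [Unitary.conjStarAlgAut_apply, ← hU]
    rw [← Matrix.mulVec_mulVec, ← Matrix.mulVec_mulVec]
    rw [Matrix.dotProduct_mulVec x U, ← Matrix.mulVec_transpose]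
    have hsU : star U = Uᵀ := by
      rw [Matrix.star_eq_conjTranspose, conjTranspose_eq_transpose_of_trivial]
    rw [← hsU, ← hp, ← hq]
    simp only [dotProduct, Matrix.mulVec_diagonal, Function.comp_apply,
      RCLike.ofReal_real_eq_id, id_eq]
    exact Finset.sum_congr rfl fun i _ => by ring
  -- Parseval
  have hpar : ∀ z : V → ℝ, (star U *ᵥ z) ⬝ᵥ (star U *ᵥ z) = z ⬝ᵥ z := by
    intro z
    have hsU : star U = Uᵀ := by
      rw [Matrix.star_eq_conjTranspose, conjTranspose_eq_transpose_of_trivial]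
    have hUU2 : U * Uᵀ = 1 := by rw [← hsU]; exact hUU
    rw [Matrix.dotProduct_mulVec, ← Matrix.mulVec_transpose, hsU, Matrix.transpose_transpose,
      Matrix.mulVec_mulVec, hUU2, Matrix.one_mulVec]
  -- eigenvalue bound
  have hμb : ∀ i, 0 ≤ lam → |hA.eigenvalues i * (p i * q i)| ≤ lam * (|p i| * |q i|) := by
    intro i _
    by_cases hμd : hA.eigenvalues i = (d : ℝ)
    · have hev := hA.mulVec_eigenvectorBasis i
      rw [hμd] at hev
      have := hx _ hev
      rw [← hpc i] at this
      simp [this]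
    · have hmem := hA.eigenvalues_mem_spectrum_real i
      have hle := hspec _ hmem hμd
      rw [abs_mul, abs_mul]
      exact mul_le_mul_of_nonneg_right hle (by positivity)
  have h1 : ∑ i : V, |p i| ^ 2 = x ⬝ᵥ x := by
    rw [← hpar x, ← hp]
    simp [dotProduct, sq_abs, sq]
  have h2 : ∑ i : V, |q i| ^ 2 = y ⬝ᵥ y := by
    rw [← hpar y, ← hq]
    simp [dotProduct, sq_abs, sq]
  by_cases hlam0 : 0 ≤ lam
  · calc |x ⬝ᵥ (A *ᵥ y)| = |∑ i : V, hA.eigenvalues i * (p i * q i)| := by rw [hexp]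
      _ ≤ ∑ i : V, |hA.eigenvalues i * (p i * q i)| := Finset.abs_sum_le_sum_abs _ _
      _ ≤ ∑ i : V, lam * (|p i| * |q i|) := Finset.sum_le_sum fun i _ => hμb i hlam0
      _ = lam * ∑ i : V, |p i| * |q i| := by rw [Finset.mul_sum]
      _ ≤ lam * (Real.sqrt (∑ i : V, |p i| ^ 2) * Real.sqrt (∑ i : V, |q i| ^ 2)) := by
          refine mul_le_mul_of_nonneg_left ?_ hlam0
          exact Real.sum_mul_le_sqrt_mul_sqrt _ _ _
      _ = lam * Real.sqrt (x ⬝ᵥ x) * Real.sqrt (y ⬝ᵥ y) := by rw [h1, h2, mul_assoc]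
  · push_neg at hlam0
    have hall : ∀ i : V, p i = 0 := by
      intro i
      have hμd : hA.eigenvalues i = (d : ℝ) := by
        by_contra hne
        have := hspec _ (hA.eigenvalues_mem_spectrum_real i) hne
        exact absurd (lt_of_le_of_lt ((abs_nonneg _).trans this) hlam0) (lt_irrefl _)
      have hev := hA.mulVec_eigenvectorBasis i
      rw [hμd] at hev
      have hz := hx _ hev
      rw [← hpc i] at hz
      exact hz
    have hx0 : x ⬝ᵥ x = 0 := by rw [← h1]; simp [hall]
    rw [hexp, hx0]
    simp [hall]

/-- centered indicator vector -/
def ctr (v : V) (S : Finset V) : V → ℝ :=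
  ind S - (((S.card : ℝ)) / ((K G v).card : ℝ)) • ind (K G v)

lemma ind_dot_vec (T : Finset V) (w : V → ℝ) : ind T ⬝ᵥ w = ∑ u ∈ T, w u := by
  simp [ind, dotProduct, ite_mul, one_mul, zero_mul, Finset.sum_ite_mem, Finset.univ_inter]

lemma ctr_perp {d : ℕ} (hreg : ∀ v, G.degree v = d) (v : V) (S : Finset V) (hS : S ⊆ K G v)
    (w : V → ℝ) (hw : G.adjMatrix ℝ *ᵥ w = (d : ℝ) • w) :
    ctr G v S ⬝ᵥ w = 0 := by
  have hconst : ∀ u ∈ K G v, w u = w v := fun u hu =>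
    eig_const G hreg w hw ((mem_K G).1 hu).symm
  have hsum : ∀ T : Finset V, T ⊆ K G v → ∑ u ∈ T, w u = (T.card : ℝ) * w v := by
    intro T hT
    rw [Finset.sum_congr rfl (fun u hu => hconst u (hT hu)), Finset.sum_const,
      nsmul_eq_mul]
  rw [ctr, sub_dotProduct, smul_dotProduct, ind_dot_vec, ind_dot_vec,
    hsum S hS, hsum (K G v) (le_refl _)]
  have hK0 : ((K G v).card : ℝ) ≠ 0 := by
    exact_mod_cast (card_K_pos G v).ne'
  field_simp
  rw [smul_eq_mul, div_mul_eq_mul_div, mul_div_assoc, mul_div_cancel_right₀ _ hK0]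
  ring

lemma ctr_dot_self (v : V) (S : Finset V) (hS : S ⊆ K G v) :
    ctr G v S ⬝ᵥ ctr G v S
      = (S.card : ℝ) - (S.card : ℝ) ^ 2 / ((K G v).card : ℝ) := by
  have hK0 : ((K G v).card : ℝ) ≠ 0 := by exact_mod_cast (card_K_pos G v).ne'
  have hSK : S ∩ K G v = S := Finset.inter_eq_left.2 hS
  have hKS : K G v ∩ S = S := Finset.inter_eq_right.2 hS
  rw [ctr]
  rw [sub_dotProduct, smul_dotProduct, dotProduct_sub,
    dotProduct_sub, dotProduct_smul, dotProduct_smul,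
    ind_dot_ind, ind_dot_ind, ind_dot_ind, ind_dot_ind]
  rw [hSK, hKS, Finset.inter_self, Finset.inter_self]
  simp only [smul_eq_mul]
  field_simp
  ring

lemma ec_eq_dot (Z Y : Finset V) :
    ec G Z Y = ind Z ⬝ᵥ (G.adjMatrix ℝ *ᵥ ind Y) := by
  rw [ind_dot_vec]
  rw [ec]
  refine Finset.sum_congr rfl fun u _ => ?_
  rw [adjMatrix_mulVec_ind]
  rw [Finset.card_filter]
  push_cast
  rfl

lemma ec_decomp {d : ℕ} (hreg : ∀ v, G.degree v = d) (v : V) (Z Y : Finset V)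
    (hZ : Z ⊆ K G v) (hY : Y ⊆ K G v) :
    ec G Z Y = ctr G v Z ⬝ᵥ (G.adjMatrix ℝ *ᵥ ctr G v Y)
      + (d : ℝ) * Z.card * Y.card / ((K G v).card : ℝ) := by
  have hK0 : ((K G v).card : ℝ) ≠ 0 := by exact_mod_cast (card_K_pos G v).ne'
  set A := G.adjMatrix ℝ
  have hiZ : ind Z = ctr G v Z + ((Z.card : ℝ) / ((K G v).card : ℝ)) • ind (K G v) := by
    rw [ctr]; ring_nf
  have hiY : ind Y = ctr G v Y + ((Y.card : ℝ) / ((K G v).card : ℝ)) • ind (K G v) := by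
    rw [ctr]; ring_nf
  have hAK : A *ᵥ ind (K G v) = (d : ℝ) • ind (K G v) := mulVec_ind_K G hreg v
  have hperpZ : ctr G v Z ⬝ᵥ ind (K G v) = 0 := by
    have h := ctr_perp G hreg v Z hZ (ind (K G v)) hAK
    exact h
  have hperpY : ctr G v Y ⬝ᵥ ind (K G v) = 0 := ctr_perp G hreg v Y hY _ hAK
  have hsymm : ind (K G v) ⬝ᵥ (A *ᵥ ctr G v Y) = (A *ᵥ ind (K G v)) ⬝ᵥ ctr G v Y := by
    rw [Matrix.dotProduct_mulVec, ← Matrix.mulVec_transpose]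
    show (G.adjMatrix ℝ)ᵀ *ᵥ ind (K G v) ⬝ᵥ ctr G v Y = _
    rw [SimpleGraph.transpose_adjMatrix]
  rw [ec_eq_dot, hiZ, hiY]
  rw [Matrix.mulVec_add, Matrix.mulVec_smul, hAK]
  rw [add_dotProduct, smul_dotProduct, dotProduct_add,
    dotProduct_add, dotProduct_smul, dotProduct_smul,
    dotProduct_smul]
  rw [hperpZ, hsymm, hAK, smul_dotProduct,
    dotProduct_comm (ind (K G v)) (ctr G v Y), hperpY]
  simp only [dotProduct_smul, smul_eq_mul, ind_dot_ind, Finset.inter_self,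
    smul_zero, mul_zero, add_zero, zero_add]
  field_simp
  ring

lemma mixing {d : ℕ} {lam : ℝ} (hreg : ∀ v, G.degree v = d)
    (hspec : ∀ μ ∈ spectrum ℝ (G.adjMatrix ℝ), μ ≠ (d : ℝ) → |μ| ≤ lam)
    (hlam : 0 ≤ lam) (v : V) (Z Y : Finset V) (hZ : Z ⊆ K G v) (hY : Y ⊆ K G v) :
    (d : ℝ) * Z.card * Y.card / ((K G v).card : ℝ)
      - lam * Real.sqrt Z.card * Real.sqrt Y.card ≤ ec G Z Y := by
  have hK0 : (0:ℝ) < ((K G v).card : ℝ) := by exact_mod_cast card_K_pos G v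
  have hdec := ec_decomp G hreg v Z Y hZ hY
  have hsp := spectral G hspec (ctr G v Z) (ctr G v Y)
    (fun w hw => ctr_perp G hreg v Z hZ w hw) (fun w hw => ctr_perp G hreg v Y hY w hw)
  have hZZ : ctr G v Z ⬝ᵥ ctr G v Z ≤ (Z.card : ℝ) := by
    rw [ctr_dot_self G v Z hZ]
    have : 0 ≤ (Z.card : ℝ) ^ 2 / ((K G v).card : ℝ) := by positivity
    linarith
  have hYY : ctr G v Y ⬝ᵥ ctr G v Y ≤ (Y.card : ℝ) := by
    rw [ctr_dot_self G v Y hY]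
    have : 0 ≤ (Y.card : ℝ) ^ 2 / ((K G v).card : ℝ) := by positivity
    linarith
  have hb : |ctr G v Z ⬝ᵥ (G.adjMatrix ℝ *ᵥ ctr G v Y)|
      ≤ lam * Real.sqrt Z.card * Real.sqrt Y.card := by
    refine hsp.trans ?_
    have h1 : Real.sqrt (ctr G v Z ⬝ᵥ ctr G v Z) ≤ Real.sqrt (Z.card : ℝ) :=
      Real.sqrt_le_sqrt hZZ
    have h2 : Real.sqrt (ctr G v Y ⬝ᵥ ctr G v Y) ≤ Real.sqrt (Y.card : ℝ) :=
      Real.sqrt_le_sqrt hYY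
    have := mul_le_mul (mul_le_mul_of_nonneg_left h1 hlam) h2 (Real.sqrt_nonneg _)
      (by positivity)
    linarith
  have := neg_abs_le (ctr G v Z ⬝ᵥ (G.adjMatrix ℝ *ᵥ ctr G v Y))
  linarith

lemma lam_lower {d : ℕ} {lam : ℝ} (hreg : ∀ v, G.degree v = d) (hd : 0 < d)
    (hspec : ∀ μ ∈ spectrum ℝ (G.adjMatrix ℝ), μ ≠ (d : ℝ) → |μ| ≤ lam) (v : V) :
    0 < lam ∧ (d : ℝ) / ((K G v).card : ℝ) ≤ lam := by
  have hK1 : (0:ℝ) < ((K G v).card : ℝ) := by exact_mod_cast card_K_pos G v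
  have hdec := ec_decomp G hreg v {v} {v} (by simpa using self_mem_K G v)
    (by simpa using self_mem_K G v)
  have hec0 : ec G {v} {v} = 0 := by simp [ec, Finset.filter_singleton, SimpleGraph.irrefl]
  have hsp := spectral G hspec (ctr G v {v}) (ctr G v {v})
    (fun w hw => ctr_perp G hreg v {v} (by simpa using self_mem_K G v) w hw)
    (fun w hw => ctr_perp G hreg v {v} (by simpa using self_mem_K G v) w hw)
  have hself : ctr G v {v} ⬝ᵥ ctr G v {v} = 1 - 1 / ((K G v).card : ℝ) := by
    rw [ctr_dot_self G v {v} (by simpa using self_mem_K G v)]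
    norm_num
  have hfac : (0:ℝ) ≤ 1 - 1 / ((K G v).card : ℝ) := by
    have h1 : (1:ℝ) ≤ ((K G v).card : ℝ) := by exact_mod_cast card_K_pos G v
    have h2 : 1 / ((K G v).card : ℝ) ≤ 1 := by rw [div_le_one hK1]; exact h1
    linarith
  rw [hself] at hsp
  have hxAx : ctr G v {v} ⬝ᵥ (G.adjMatrix ℝ *ᵥ ctr G v {v})
      = -((d:ℝ) / ((K G v).card : ℝ)) := by
    rw [hec0] at hdec
    simp only [Finset.card_singleton, Nat.cast_one, mul_one] at hdec
    have : (d:ℝ) * 1 * 1 / ((K G v).card : ℝ) = (d:ℝ)/((K G v).card : ℝ) := by ring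
    linarith [hdec]
  rw [hxAx] at hsp
  have hdpos : (0:ℝ) < (d:ℝ)/((K G v).card:ℝ) := by
    have : (0:ℝ) < (d:ℝ) := by exact_mod_cast hd
    positivity
  rw [abs_neg, abs_of_pos hdpos] at hsp
  have hs2 : lam * Real.sqrt (1 - 1/((K G v).card:ℝ)) * Real.sqrt (1 - 1/((K G v).card:ℝ))
      = lam * (1 - 1/((K G v).card:ℝ)) := by
    rw [mul_assoc, Real.mul_self_sqrt hfac]
  rw [hs2] at hsp
  have hlampos : 0 < lam := by nlinarith
  refine ⟨hlampos, ?_⟩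
  have h5 : 0 < lam * (1/((K G v).card:ℝ)) := mul_pos hlampos (by positivity)
  nlinarith [hsp, h5]

/-- number of independent `s`-tuples with entries in `Y` -/
def Nt (Y : Finset V) (s : ℕ) : ℕ :=
  (Finset.univ.filter fun f : Fin s → V =>
    (∀ i, f i ∈ Y) ∧ ∀ i j, i ≠ j → ¬ G.Adj (f i) (f j)).card

/-- potential function -/
def phi (d : ℕ) (Y : Finset V) : ℝ :=
  (2 / (d : ℝ)) * ∑ v : V, Real.log (max 1 ((Y ∩ K G v).card : ℝ))

lemma phi_nonneg (d : ℕ) (Y : Finset V) : 0 ≤ phi G d Y := by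
  have h : ∀ v : V, 0 ≤ Real.log (max 1 ((Y ∩ K G v).card : ℝ)) := fun v =>
    Real.log_nonneg (le_max_left _ _)
  have h2 := Finset.sum_nonneg (fun v (_ : v ∈ Finset.univ) => h v)
  exact mul_nonneg (by positivity) h2

lemma phi_mono (d : ℕ) {Y' Y : Finset V} (h : Y' ⊆ Y) : phi G d Y' ≤ phi G d Y := by
  unfold phi
  have h2d : (0:ℝ) ≤ 2 / (d : ℝ) := by positivity
  refine mul_le_mul_of_nonneg_left (Finset.sum_le_sum fun v _ => ?_) h2d
  have hm : (0:ℝ) < max 1 ((Y' ∩ K G v).card : ℝ) := lt_max_of_lt_left one_pos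
  refine Real.log_le_log hm (max_le_max (le_refl _) ?_)
  exact_mod_cast Finset.card_le_card (Finset.inter_subset_inter h (le_refl _))

lemma phi_univ_le (d : ℕ) :
    phi G d Finset.univ ≤ 2 * (Fintype.card V : ℝ) * Real.log (Fintype.card V) / d := by
  unfold phi
  have hterm : ∀ v : V, Real.log (max 1 (((Finset.univ : Finset V) ∩ K G v).card : ℝ))
      ≤ Real.log (Fintype.card V) := by
    intro v
    have h1 : ((Finset.univ : Finset V) ∩ K G v).card ≤ Fintype.card V := by
      exact le_trans (Finset.card_le_card (Finset.inter_subset_left)) (by simp)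
    have h2 : (1:ℝ) ≤ (Fintype.card V : ℝ) := by
      have : 0 < Fintype.card V := Fintype.card_pos_iff.2 ⟨v⟩
      exact_mod_cast this
    have h3 : max 1 (((Finset.univ : Finset V) ∩ K G v).card : ℝ) ≤ (Fintype.card V : ℝ) := by
      refine max_le h2 ?_
      exact_mod_cast h1
    exact Real.log_le_log (lt_max_of_lt_left one_pos) h3
  have hsum : ∑ v : V, Real.log (max 1 (((Finset.univ : Finset V) ∩ K G v).card : ℝ))
      ≤ (Fintype.card V : ℝ) * Real.log (Fintype.card V) := by
    calc ∑ v : V, Real.log (max 1 (((Finset.univ : Finset V) ∩ K G v).card : ℝ))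
        ≤ ∑ _v : V, Real.log (Fintype.card V) := Finset.sum_le_sum fun v _ => hterm v
      _ = (Fintype.card V : ℝ) * Real.log (Fintype.card V) := by
          rw [Finset.sum_const, nsmul_eq_mul]; simp
  have h2d : (0:ℝ) ≤ 2 / (d : ℝ) := by positivity
  calc (2 / (d : ℝ)) * ∑ v : V, Real.log (max 1 (((Finset.univ : Finset V) ∩ K G v).card : ℝ))
      ≤ (2 / (d : ℝ)) * ((Fintype.card V : ℝ) * Real.log (Fintype.card V)) :=
        mul_le_mul_of_nonneg_left hsum h2d
    _ = 2 * (Fintype.card V : ℝ) * Real.log (Fintype.card V) / d := by ring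

lemma card_eq_sum_inter_K (S : Finset V) :
    (S.card : ℝ) = ∑ v : V, ((S ∩ K G v).card : ℝ) / ((K G v).card : ℝ) := by
  have hstep : ∀ v : V, ((S ∩ K G v).card : ℝ) / ((K G v).card : ℝ)
      = ∑ u ∈ S, if u ∈ K G v then 1 / ((K G v).card : ℝ) else 0 := by
    intro v
    rw [Finset.sum_ite_mem, Finset.sum_const, nsmul_eq_mul]
    rw [div_eq_mul_one_div]
  rw [Finset.sum_congr rfl fun v _ => hstep v, Finset.sum_comm]
  have hinner : ∀ u ∈ S, (∑ v : V, if u ∈ K G v then 1 / ((K G v).card : ℝ) else 0) = 1 := by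
    intro u _
    have hmemiff : ∀ v : V, u ∈ K G v ↔ v ∈ K G u := by
      intro v; rw [mem_K, mem_K]; exact ⟨fun h => h.symm, fun h => h.symm⟩
    have hcardeq : ∀ v ∈ K G u, ((K G v).card : ℝ) = ((K G u).card : ℝ) := by
      intro v hv; rw [K_eq_of_mem G hv]
    calc (∑ v : V, if u ∈ K G v then 1 / ((K G v).card : ℝ) else 0)
        = ∑ v : V, if v ∈ K G u then 1 / ((K G v).card : ℝ) else 0 :=
          Finset.sum_congr rfl fun v _ => if_congr (hmemiff v) rfl rfl
      _ = ∑ v ∈ K G u, 1 / ((K G v).card : ℝ) := by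
          rw [Finset.sum_ite_mem, Finset.univ_inter]
      _ = ∑ v ∈ K G u, 1 / ((K G u).card : ℝ) :=
          Finset.sum_congr rfl fun v hv => by rw [hcardeq v hv]
      _ = 1 := by
          rw [Finset.sum_const, nsmul_eq_mul]
          have : ((K G u).card : ℝ) ≠ 0 := by exact_mod_cast (card_K_pos G u).ne'
          field_simp
  rw [Finset.sum_congr rfl hinner, Finset.sum_const, nsmul_eq_mul, mul_one]

/-- exceptional vertices of `Y`: low degree into `Y` within their component -/
def Ex (d : ℕ) (Y : Finset V) : Finset V :=
  Y.filter fun v => ((Y.filter fun w => G.Adj v w).card : ℝ)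
    < (d : ℝ) * ((Y ∩ K G v).card : ℝ) / (2 * ((K G v).card : ℝ))

lemma Ex_subset (d : ℕ) (Y : Finset V) : Ex G d Y ⊆ Y := Finset.filter_subset _ _

lemma Ex_card_le {d : ℕ} {lam : ℝ} (hreg : ∀ v, G.degree v = d) (hd : 0 < d)
    (hspec : ∀ μ ∈ spectrum ℝ (G.adjMatrix ℝ), μ ≠ (d : ℝ) → |μ| ≤ lam)
    (hlam : 0 ≤ lam) (Y : Finset V) :
    ((Ex G d Y).card : ℝ) ≤ 2 * lam * (Fintype.card V : ℝ) / d := by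
  have hdR : (0:ℝ) < (d:ℝ) := by exact_mod_cast hd
  -- per component claim
  have hcomp : ∀ v : V, ((Ex G d Y ∩ K G v).card : ℝ) ≤ 2 * lam * ((K G v).card : ℝ) / d := by
    intro v
    set Zv := Ex G d Y ∩ K G v with hZv
    set Yv := Y ∩ K G v with hYv
    have hZY : Zv ⊆ Yv := Finset.inter_subset_inter (Ex_subset G d Y) (le_refl _)
    have hZK : Zv ⊆ K G v := Finset.inter_subset_right
    have hYK : Yv ⊆ K G v := Finset.inter_subset_right
    have hkpos : (0:ℝ) < ((K G v).card : ℝ) := by exact_mod_cast card_K_pos G v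
    by_cases hz0 : Zv.card = 0
    · rw [hz0]; push_cast; positivity
    · have hz1 : (1:ℝ) ≤ (Zv.card : ℝ) := by
        have : 1 ≤ Zv.card := Nat.one_le_iff_ne_zero.2 hz0
        exact_mod_cast this
      have hy1 : (1:ℝ) ≤ (Yv.card : ℝ) := by
        have : Zv.card ≤ Yv.card := Finset.card_le_card hZY
        have h1 : 1 ≤ Yv.card := le_trans (Nat.one_le_iff_ne_zero.2 hz0) this
        exact_mod_cast h1
      -- upper bound for ec
      have hecub : ec G Zv Yv ≤ (Zv.card : ℝ) * ((d : ℝ) * (Yv.card : ℝ)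
          / (2 * ((K G v).card : ℝ))) := by
        rw [ec]
        have hterm : ∀ u ∈ Zv, (∑ w ∈ Yv, if G.Adj u w then (1:ℝ) else 0)
            ≤ (d : ℝ) * (Yv.card : ℝ) / (2 * ((K G v).card : ℝ)) := by
          intro u hu
          have huK : u ∈ K G v := hZK hu
          have huEx : u ∈ Ex G d Y := (Finset.mem_inter.1 hu).1
          have hKu : K G u = K G v := K_eq_of_mem G huK
          have hfilt : Y.filter (fun w => G.Adj u w) = Yv.filter (fun w => G.Adj u w) := by
            ext w
            simp only [Finset.mem_filter, hYv, Finset.mem_inter]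
            constructor
            · rintro ⟨hwY, hadj⟩
              exact ⟨⟨hwY, adj_mem_K G huK hadj⟩, hadj⟩
            · rintro ⟨⟨hwY, _⟩, hadj⟩; exact ⟨hwY, hadj⟩
          have hEx := (Finset.mem_filter.1 huEx).2
          rw [hfilt, hKu] at hEx
          have hsum : (∑ w ∈ Yv, if G.Adj u w then (1:ℝ) else 0)
              = ((Yv.filter fun w => G.Adj u w).card : ℝ) := by
            rw [Finset.card_filter]
            push_cast
            rfl
          rw [hsum]
          rw [hYv] at hEx
          exact le_of_lt hEx
        calc ∑ u ∈ Zv, ∑ w ∈ Yv, (if G.Adj u w then (1:ℝ) else 0)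
            ≤ ∑ _u ∈ Zv, (d : ℝ) * (Yv.card : ℝ) / (2 * ((K G v).card : ℝ)) :=
              Finset.sum_le_sum hterm
          _ = (Zv.card : ℝ) * ((d : ℝ) * (Yv.card : ℝ) / (2 * ((K G v).card : ℝ))) := by
              rw [Finset.sum_const, nsmul_eq_mul]
      have hmix := mixing G hreg hspec hlam v Zv Yv hZK hYK
      -- combine
      have hzy : (d : ℝ) * (Zv.card : ℝ) * (Yv.card : ℝ) / (2 * ((K G v).card : ℝ))
          ≤ lam * Real.sqrt (Zv.card : ℝ) * Real.sqrt (Yv.card : ℝ) := by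
        have hne : ((K G v).card : ℝ) ≠ 0 := hkpos.ne'
        have h2 : (Zv.card:ℝ) * ((d:ℝ) * (Yv.card:ℝ) / (2 * ((K G v).card : ℝ)))
            = ((d:ℝ) * (Zv.card:ℝ) * (Yv.card:ℝ) / ((K G v).card : ℝ)) / 2 := by
          field_simp
        have h3 : (d : ℝ) * (Zv.card : ℝ) * (Yv.card : ℝ) / (2 * ((K G v).card : ℝ))
            = ((d:ℝ) * (Zv.card:ℝ) * (Yv.card:ℝ) / ((K G v).card : ℝ)) / 2 := by
          field_simp
        rw [h3]
        rw [h2] at hecub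
        linarith [hmix, hecub]
      have hsqle : Real.sqrt (Zv.card : ℝ) * Real.sqrt (Yv.card : ℝ) ≤ (Yv.card : ℝ) := by
        have h1 : Real.sqrt (Zv.card : ℝ) ≤ Real.sqrt (Yv.card : ℝ) := by
          refine Real.sqrt_le_sqrt ?_
          exact_mod_cast Finset.card_le_card hZY
        calc Real.sqrt (Zv.card : ℝ) * Real.sqrt (Yv.card : ℝ)
            ≤ Real.sqrt (Yv.card : ℝ) * Real.sqrt (Yv.card : ℝ) :=
              mul_le_mul_of_nonneg_right h1 (Real.sqrt_nonneg _)
          _ = (Yv.card : ℝ) := Real.mul_self_sqrt (by positivity)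
      have hfin : (d : ℝ) * (Zv.card : ℝ) * (Yv.card : ℝ) / (2 * ((K G v).card : ℝ))
          ≤ lam * (Yv.card : ℝ) := by
        calc (d : ℝ) * (Zv.card : ℝ) * (Yv.card : ℝ) / (2 * ((K G v).card : ℝ))
            ≤ lam * (Real.sqrt (Zv.card : ℝ) * Real.sqrt (Yv.card : ℝ)) := by
              rw [← mul_assoc]; exact hzy
          _ ≤ lam * (Yv.card : ℝ) := mul_le_mul_of_nonneg_left hsqle hlam
      -- divide by Yv.card and rearrange
      have hy0 : (0:ℝ) < (Yv.card : ℝ) := lt_of_lt_of_le one_pos hy1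
      rw [div_le_iff₀ (by positivity)] at hfin
      have h2 : (d : ℝ) * (Zv.card : ℝ) ≤ lam * (2 * ((K G v).card : ℝ)) := by
        nlinarith [hfin, hy0]
      rw [le_div_iff₀ hdR]
      nlinarith [h2]
  -- sum over vertices
  calc ((Ex G d Y).card : ℝ)
      = ∑ v : V, ((Ex G d Y ∩ K G v).card : ℝ) / ((K G v).card : ℝ) :=
        card_eq_sum_inter_K G _
    _ ≤ ∑ _v : V, 2 * lam / d := by
        refine Finset.sum_le_sum fun v _ => ?_
        have hkpos : (0:ℝ) < ((K G v).card : ℝ) := by exact_mod_cast card_K_pos G v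
        rw [div_le_div_iff₀ hkpos hdR]
        have := hcomp v
        rw [le_div_iff₀ hdR] at this
        nlinarith [this]
    _ = 2 * lam * (Fintype.card V : ℝ) / d := by
        rw [Finset.sum_const, nsmul_eq_mul]
        simp only [Finset.card_univ]
        ring

lemma phi_shrink {d : ℕ} (hreg : ∀ v, G.degree v = d) (hd : 0 < d) {Y : Finset V} {v : V}
    (hvY : v ∈ Y) (hvEx : v ∉ Ex G d Y) :
    phi G d (Y.filter fun w => ¬ G.Adj v w) ≤ phi G d Y - 1 := by
  set Y' := Y.filter fun w => ¬ G.Adj v w with hY'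
  have hY'sub : Y' ⊆ Y := Finset.filter_subset _ _
  have hdR : (0:ℝ) < (d:ℝ) := by exact_mod_cast hd
  have hkpos : (0:ℝ) < ((K G v).card : ℝ) := by exact_mod_cast card_K_pos G v
  have hdk : (d:ℝ) + 1 ≤ ((K G v).card : ℝ) := by exact_mod_cast d_lt_card_K G hreg v
  have hvY' : v ∈ Y' := Finset.mem_filter.2 ⟨hvY, G.irrefl⟩
  have hy1 : (1:ℝ) ≤ ((Y ∩ K G v).card : ℝ) := by
    have : v ∈ Y ∩ K G v := Finset.mem_inter.2 ⟨hvY, self_mem_K G v⟩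
    have h := Finset.card_pos.2 ⟨v, this⟩
    exact_mod_cast h
  have hy'1 : (1:ℝ) ≤ ((Y' ∩ K G v).card : ℝ) := by
    have : v ∈ Y' ∩ K G v := Finset.mem_inter.2 ⟨hvY', self_mem_K G v⟩
    have h := Finset.card_pos.2 ⟨v, this⟩
    exact_mod_cast h
  -- the degree condition
  have hdeg : (d:ℝ) * ((Y ∩ K G v).card : ℝ) / (2 * ((K G v).card : ℝ))
      ≤ ((Y.filter fun w => G.Adj v w).card : ℝ) := by
    by_contra hcon
    push_neg at hcon
    exact hvEx (Finset.mem_filter.2 ⟨hvY, hcon⟩)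
  -- card bound
  have hcard : ((Y' ∩ K G v).card : ℝ) + ((Y.filter fun w => G.Adj v w).card : ℝ)
      ≤ ((Y ∩ K G v).card : ℝ) := by
    have hdisj : Disjoint (Y' ∩ K G v) (Y.filter fun w => G.Adj v w) := by
      refine Finset.disjoint_left.2 fun w hw1 hw2 => ?_
      have h1 := (Finset.mem_filter.1 ((Finset.mem_inter.1 hw1).1)).2
      exact h1 (Finset.mem_filter.1 hw2).2
    have hsub : (Y' ∩ K G v) ∪ (Y.filter fun w => G.Adj v w) ⊆ Y ∩ K G v := by
      refine Finset.union_subset ?_ ?_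
      · exact Finset.inter_subset_inter hY'sub (le_refl _)
      · intro w hw
        have h1 := Finset.mem_filter.1 hw
        exact Finset.mem_inter.2 ⟨h1.1, adj_mem_K G (self_mem_K G v) h1.2⟩
    have := Finset.card_le_card hsub
    rw [Finset.card_union_of_disjoint hdisj] at this
    exact_mod_cast this
  -- shrink factor
  have hbeta : (0:ℝ) < 1 - (d:ℝ) / (2 * ((K G v).card : ℝ)) := by
    have h1 : (d:ℝ) / (2 * ((K G v).card : ℝ)) < 1 := by
      rw [div_lt_one (by positivity)]
      linarith
    linarith
  have hshrunk : ((Y' ∩ K G v).card : ℝ)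
      ≤ ((Y ∩ K G v).card : ℝ) * (1 - (d:ℝ) / (2 * ((K G v).card : ℝ))) := by
    have he : ((Y ∩ K G v).card : ℝ) * (1 - (d:ℝ) / (2 * ((K G v).card : ℝ)))
        = ((Y ∩ K G v).card : ℝ) - (d:ℝ) * ((Y ∩ K G v).card : ℝ) / (2 * ((K G v).card : ℝ)) := by
      ring
    rw [he]
    linarith [hcard, hdeg]
  -- log inequality
  have hlog : Real.log ((Y' ∩ K G v).card : ℝ)
      ≤ Real.log ((Y ∩ K G v).card : ℝ) - (d:ℝ) / (2 * ((K G v).card : ℝ)) := by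
    have h1 : Real.log ((Y' ∩ K G v).card : ℝ)
        ≤ Real.log (((Y ∩ K G v).card : ℝ) * (1 - (d:ℝ) / (2 * ((K G v).card : ℝ)))) :=
      Real.log_le_log (by linarith) hshrunk
    rw [Real.log_mul (by linarith) (ne_of_gt hbeta)] at h1
    have h2 : Real.log (1 - (d:ℝ) / (2 * ((K G v).card : ℝ)))
        ≤ (1 - (d:ℝ) / (2 * ((K G v).card : ℝ))) - 1 := Real.log_le_sub_one_of_pos hbeta
    linarith
  -- assemble
  have hterm : ∀ u : V, Real.log (max 1 ((Y' ∩ K G u).card : ℝ))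
      ≤ Real.log (max 1 ((Y ∩ K G u).card : ℝ)) := by
    intro u
    refine Real.log_le_log (lt_max_of_lt_left one_pos) (max_le_max (le_refl _) ?_)
    exact_mod_cast Finset.card_le_card (Finset.inter_subset_inter hY'sub (le_refl _))
  have htermK : ∀ u ∈ K G v, Real.log (max 1 ((Y ∩ K G u).card : ℝ))
      - Real.log (max 1 ((Y' ∩ K G u).card : ℝ)) ≥ (d:ℝ) / (2 * ((K G v).card : ℝ)) := by
    intro u hu
    have hKu : K G u = K G v := K_eq_of_mem G hu
    rw [hKu]
    rw [max_eq_right hy1, max_eq_right hy'1]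
    linarith [hlog]
  have hsumK : ∑ u ∈ K G v, (Real.log (max 1 ((Y ∩ K G u).card : ℝ))
      - Real.log (max 1 ((Y' ∩ K G u).card : ℝ)))
      ≥ ((K G v).card : ℝ) * ((d:ℝ) / (2 * ((K G v).card : ℝ))) := by
    calc ∑ u ∈ K G v, (Real.log (max 1 ((Y ∩ K G u).card : ℝ))
          - Real.log (max 1 ((Y' ∩ K G u).card : ℝ)))
        ≥ ∑ _u ∈ K G v, (d:ℝ) / (2 * ((K G v).card : ℝ)) :=
          Finset.sum_le_sum fun u hu => htermK u hu
      _ = ((K G v).card : ℝ) * ((d:ℝ) / (2 * ((K G v).card : ℝ))) := by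
          rw [Finset.sum_const, nsmul_eq_mul]
  have hsumall : ∑ u : V, (Real.log (max 1 ((Y ∩ K G u).card : ℝ))
      - Real.log (max 1 ((Y' ∩ K G u).card : ℝ))) ≥ (d:ℝ) / 2 := by
    have h1 : ∑ u ∈ K G v, (Real.log (max 1 ((Y ∩ K G u).card : ℝ))
        - Real.log (max 1 ((Y' ∩ K G u).card : ℝ)))
        ≤ ∑ u : V, (Real.log (max 1 ((Y ∩ K G u).card : ℝ))
        - Real.log (max 1 ((Y' ∩ K G u).card : ℝ))) := by
      refine Finset.sum_le_sum_of_subset_of_nonneg (Finset.subset_univ _) ?_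
      intro u _ _
      have := hterm u
      linarith
    have hkne : ((K G v).card : ℝ) ≠ 0 := hkpos.ne'
    have h2 : ((K G v).card : ℝ) * ((d:ℝ) / (2 * ((K G v).card : ℝ))) = (d:ℝ)/2 := by
      field_simp
    linarith [hsumK, h1]
  -- conclude
  unfold phi
  have hfin : (2 / (d : ℝ)) * (∑ u : V, Real.log (max 1 ((Y ∩ K G u).card : ℝ))
      - ∑ u : V, Real.log (max 1 ((Y' ∩ K G u).card : ℝ))) ≥ 1 := by
    rw [← Finset.sum_sub_distrib]
    have h2d : (0:ℝ) < 2 / (d:ℝ) := by positivity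
    calc (2 / (d : ℝ)) * (∑ u : V, (Real.log (max 1 ((Y ∩ K G u).card : ℝ))
          - Real.log (max 1 ((Y' ∩ K G u).card : ℝ))))
        ≥ (2 / (d : ℝ)) * ((d:ℝ)/2) := mul_le_mul_of_nonneg_left hsumall (le_of_lt h2d)
      _ = 1 := by field_simp
  have := hfin
  nlinarith [this]

lemma Nt_rec (Y : Finset V) (s : ℕ) :
    Nt G Y (s + 1) ≤ ∑ v ∈ Y, Nt G (Y.filter fun w => ¬ G.Adj v w) s := by
  have hmap : ∀ f ∈ (Finset.univ.filter fun f : Fin (s+1) → V =>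
      (∀ i, f i ∈ Y) ∧ ∀ i j, i ≠ j → ¬ G.Adj (f i) (f j)), f 0 ∈ Y := by
    intro f hf
    exact (Finset.mem_filter.1 hf).2.1 0
  unfold Nt
  rw [Finset.card_eq_sum_card_fiberwise hmap]
  refine Finset.sum_le_sum fun v hv => ?_
  refine Finset.card_le_card_of_injOn (fun f => fun i : Fin s => f i.succ) ?_ ?_
  · intro f hf
    rw [Finset.mem_coe, Finset.mem_filter] at hf
    obtain ⟨hf1, hf0⟩ := hf
    rw [Finset.mem_filter] at hf1
    obtain ⟨-, hfY, hfadj⟩ := hf1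
    rw [Finset.mem_coe, Finset.mem_filter]
    refine ⟨Finset.mem_univ _, fun i => ?_, fun i j hij => ?_⟩
    · refine Finset.mem_filter.2 ⟨hfY i.succ, ?_⟩
      rw [← hf0]
      exact hfadj 0 i.succ (Ne.symm (Fin.succ_ne_zero i))
    · exact hfadj i.succ j.succ (fun h => hij (Fin.succ_inj.1 h))
  · intro f hf g hg hfg
    rw [Finset.mem_coe, Finset.mem_filter] at hf hg
    funext i
    refine Fin.cases ?_ ?_ i
    · rw [hf.2, hg.2]
    · intro j
      exact congrFun hfg j

lemma Nt_zero (Y : Finset V) : Nt G Y 0 = 1 := by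
  unfold Nt
  rw [Finset.filter_true_of_mem]
  · simp
  · intro f _
    exact ⟨fun i => i.elim0, fun i j _ => i.elim0⟩

lemma main_ind {d : ℕ} {lam : ℝ} (hreg : ∀ v, G.degree v = d) (hd : 0 < d)
    (hspec : ∀ μ ∈ spectrum ℝ (G.adjMatrix ℝ), μ ≠ (d : ℝ) → |μ| ≤ lam)
    (hlam : 0 ≤ lam) (hn : 1 ≤ (Fintype.card V : ℝ)) :
    ∀ (s : ℕ) (Y : Finset V), (Nt G Y s : ℝ) ≤
      (Fintype.card V : ℝ) ^ (phi G d Y)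
        * (2 * (lam * (Fintype.card V : ℝ) / d) + 1) ^ s := by
  have hdR : (0:ℝ) < (d:ℝ) := by exact_mod_cast hd
  have hn0 : (0:ℝ) < (Fintype.card V : ℝ) := lt_of_lt_of_le one_pos hn
  have hbase : (0:ℝ) ≤ 2 * (lam * (Fintype.card V : ℝ) / d) + 1 := by positivity
  intro s
  induction s with
  | zero =>
    intro Y
    rw [Nt_zero, pow_zero, mul_one]
    have h1 : (Fintype.card V : ℝ) ^ (0:ℝ) ≤ (Fintype.card V : ℝ) ^ (phi G d Y) :=
      Real.rpow_le_rpow_of_exponent_le hn (phi_nonneg G d Y)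
    rw [Real.rpow_zero] at h1
    exact_mod_cast h1
  | succ s ih =>
    intro Y
    have hrec : (Nt G Y (s+1) : ℝ)
        ≤ ∑ v ∈ Y, (Nt G (Y.filter fun w => ¬ G.Adj v w) s : ℝ) := by
      exact_mod_cast Nt_rec G Y s
    set a1 : ℝ := 2 * (lam * (Fintype.card V : ℝ) / d) + 1 with ha1
    set B : ℝ := (Fintype.card V : ℝ) ^ (phi G d Y) * a1 ^ s with hB
    have hBnonneg : 0 ≤ B := by
      have := Real.rpow_nonneg (le_of_lt hn0) (phi G d Y)
      positivity
    have hsplit : ∑ v ∈ Y, (Nt G (Y.filter fun w => ¬ G.Adj v w) s : ℝ)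
        = ∑ v ∈ Y.filter (fun v => v ∈ Ex G d Y),
            (Nt G (Y.filter fun w => ¬ G.Adj v w) s : ℝ)
          + ∑ v ∈ Y.filter (fun v => v ∉ Ex G d Y),
            (Nt G (Y.filter fun w => ¬ G.Adj v w) s : ℝ) :=
      (Finset.sum_filter_add_sum_filter_not Y _ _).symm
    -- exceptional part
    have hexpart : ∑ v ∈ Y.filter (fun v => v ∈ Ex G d Y),
        (Nt G (Y.filter fun w => ¬ G.Adj v w) s : ℝ)
        ≤ (2 * lam * (Fintype.card V : ℝ) / d) * B := by
      have hone : ∀ v ∈ Y.filter (fun v => v ∈ Ex G d Y),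
          (Nt G (Y.filter fun w => ¬ G.Adj v w) s : ℝ) ≤ B := by
        intro v _
        refine le_trans (ih _) ?_
        rw [hB]
        refine mul_le_mul_of_nonneg_right ?_ (by positivity)
        exact Real.rpow_le_rpow_of_exponent_le hn
          (phi_mono G d (Finset.filter_subset _ _))
      calc ∑ v ∈ Y.filter (fun v => v ∈ Ex G d Y),
            (Nt G (Y.filter fun w => ¬ G.Adj v w) s : ℝ)
          ≤ ∑ _v ∈ Y.filter (fun v => v ∈ Ex G d Y), B := Finset.sum_le_sum hone
        _ = ((Y.filter (fun v => v ∈ Ex G d Y)).card : ℝ) * B := by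
            rw [Finset.sum_const, nsmul_eq_mul]
        _ ≤ (2 * lam * (Fintype.card V : ℝ) / d) * B := by
            refine mul_le_mul_of_nonneg_right ?_ hBnonneg
            refine le_trans ?_ (Ex_card_le G hreg hd hspec hlam Y)
            have hsub : Y.filter (fun v => v ∈ Ex G d Y) ⊆ Ex G d Y := by
              intro u hu
              exact (Finset.mem_filter.1 hu).2
            exact_mod_cast Finset.card_le_card hsub
    -- shrinking part
    have hshpart : ∑ v ∈ Y.filter (fun v => v ∉ Ex G d Y),
        (Nt G (Y.filter fun w => ¬ G.Adj v w) s : ℝ) ≤ B := by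
      have hone : ∀ v ∈ Y.filter (fun v => v ∉ Ex G d Y),
          (Nt G (Y.filter fun w => ¬ G.Adj v w) s : ℝ)
          ≤ (Fintype.card V : ℝ) ^ (phi G d Y - 1) * a1 ^ s := by
        intro v hv
        obtain ⟨hvY, hvEx⟩ := Finset.mem_filter.1 hv
        refine le_trans (ih _) ?_
        refine mul_le_mul_of_nonneg_right ?_ (by positivity)
        exact Real.rpow_le_rpow_of_exponent_le hn (phi_shrink G hreg hd hvY hvEx)
      calc ∑ v ∈ Y.filter (fun v => v ∉ Ex G d Y),
            (Nt G (Y.filter fun w => ¬ G.Adj v w) s : ℝ)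
          ≤ ∑ _v ∈ Y.filter (fun v => v ∉ Ex G d Y),
            (Fintype.card V : ℝ) ^ (phi G d Y - 1) * a1 ^ s := Finset.sum_le_sum hone
        _ = ((Y.filter (fun v => v ∉ Ex G d Y)).card : ℝ)
            * ((Fintype.card V : ℝ) ^ (phi G d Y - 1) * a1 ^ s) := by
            rw [Finset.sum_const, nsmul_eq_mul]
        _ ≤ (Fintype.card V : ℝ) * ((Fintype.card V : ℝ) ^ (phi G d Y - 1) * a1 ^ s) := by
            refine mul_le_mul_of_nonneg_right ?_ (by positivity)
            have h1 : (Y.filter (fun v => v ∉ Ex G d Y)).card ≤ Fintype.card V := by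
              exact le_trans (Finset.card_le_card (Finset.subset_univ _)) (by simp)
            exact_mod_cast h1
        _ = B := by
            rw [hB, Real.rpow_sub hn0, Real.rpow_one]
            field_simp
    -- total
    calc (Nt G Y (s+1) : ℝ) ≤ _ := hrec
      _ = _ := hsplit
      _ ≤ (2 * lam * (Fintype.card V : ℝ) / d) * B + B := by
          exact add_le_add hexpart hshpart
      _ = B * a1 := by rw [ha1]; ring
      _ = (Fintype.card V : ℝ) ^ (phi G d Y) * a1 ^ (s+1) := by
          rw [hB, pow_succ]; ring

end
end AlonRodl


/-- An `(n, d, λ)`-graph: a `d`-regular simple graph on `n` vertices such that every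
eigenvalue of its adjacency matrix other than the trivial eigenvalue `d` has absolute
value at most `λ`. -/
def IsNDLGraph {V : Type*} [Fintype V] (G : SimpleGraph V) (n d : ℕ) (lam : ℝ) : Prop :=
  Fintype.card V = n ∧ (∀ v : V, Nat.card (G.neighborSet v) = d) ∧
    ∀ μ ∈ spectrum ℝ (SimpleGraph.adjMatrix ℝ G), μ ≠ (d : ℝ) → |μ| ≤ lam

/-- Lemma (Alon–Rödl): in an `(n, d, λ)`-graph, if `t ≥ 2n (log n)² / d`, then the number
of ordered `t`-tuples of vertices, no two of which are adjacent, is at most `(4enλ/d)^t`. -/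
theorem alon_rodl_tuple_count {V : Type*} [Fintype V] (G : SimpleGraph V)
    (n d : ℕ) (lam : ℝ) (hG : IsNDLGraph G n d lam) (hd : 0 < d)
    (t : ℕ) (ht : 0 < t) (htlarge : 2 * n * Real.log n ^ 2 / d ≤ (t : ℝ)) :
    (Nat.card {f : Fin t → V // ∀ i j : Fin t, i ≠ j → ¬ G.Adj (f i) (f j)} : ℝ)
      ≤ (4 * Real.exp 1 * n * lam / d) ^ t := by
  obtain ⟨hcard, hdegs, hspec⟩ := hG
  subst hcard
  rcases isEmpty_or_nonempty V with hV | hV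
  · have hz : Nat.card {f : Fin t → V // ∀ i j : Fin t, i ≠ j → ¬ G.Adj (f i) (f j)} = 0 := by
      have hE : IsEmpty (Fin t → V) := ⟨fun f => IsEmpty.false (f ⟨0, ht⟩)⟩
      have : IsEmpty {f : Fin t → V // ∀ i j : Fin t, i ≠ j → ¬ G.Adj (f i) (f j)} :=
        ⟨fun x => hE.false x.1⟩
      exact Nat.card_of_isEmpty
    rw [hz]
    have hn0 : (Fintype.card V : ℝ) = 0 := by
      simp [Fintype.card_eq_zero]
    rw [hn0]
    have hzz : (4 * Real.exp 1 * (0:ℝ) * lam / d) ^ t = 0 := by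
      rw [show 4 * Real.exp 1 * (0:ℝ) * lam / d = 0 by ring, zero_pow ht.ne']
    rw [hzz]
    norm_num
  · -- main case
    have hreg : ∀ v : V, G.degree v = d := by
      intro v
      rw [← SimpleGraph.card_neighborSet_eq_degree, ← Nat.card_eq_fintype_card]
      exact hdegs v
    have hdR : (0:ℝ) < (d:ℝ) := by exact_mod_cast hd
    have hn1 : (1:ℝ) ≤ (Fintype.card V : ℝ) := by
      have : 0 < Fintype.card V := Fintype.card_pos
      exact_mod_cast this
    have hn0 : (0:ℝ) < (Fintype.card V : ℝ) := lt_of_lt_of_le one_pos hn1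
    obtain ⟨hlampos, hlamge⟩ := AlonRodl.lam_lower G hreg hd hspec (Classical.arbitrary V)
    have hkpos : (0:ℝ) < ((AlonRodl.K G (Classical.arbitrary V)).card : ℝ) := by
      have := AlonRodl.card_K_pos G (Classical.arbitrary V)
      exact_mod_cast this
    have hkn : ((AlonRodl.K G (Classical.arbitrary V)).card : ℝ) ≤ (Fintype.card V : ℝ) := by
      have h1 : (AlonRodl.K G (Classical.arbitrary V)).card ≤ Fintype.card V := by
        exact le_trans (Finset.card_le_card (Finset.subset_univ _)) (by simp)
      exact_mod_cast h1
    have ha1 : 1 ≤ lam * (Fintype.card V : ℝ) / d := by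
      have h1 : (d:ℝ) ≤ lam * ((AlonRodl.K G (Classical.arbitrary V)).card : ℝ) := by
        rw [div_le_iff₀ hkpos] at hlamge
        linarith
      have h2 : lam * ((AlonRodl.K G (Classical.arbitrary V)).card : ℝ)
          ≤ lam * (Fintype.card V : ℝ) := mul_le_mul_of_nonneg_left hkn hlampos.le
      rw [le_div_iff₀ hdR, one_mul]
      linarith
    -- identify the count
    have hcount : (Nat.card {f : Fin t → V // ∀ i j : Fin t, i ≠ j → ¬ G.Adj (f i) (f j)} : ℝ)
        = (AlonRodl.Nt G Finset.univ t : ℝ) := by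
      congr 1
      rw [Nat.card_eq_fintype_card, Fintype.card_subtype]
      unfold AlonRodl.Nt
      congr 1
      apply Finset.filter_congr
      intro f _
      simp only [Finset.mem_univ, forall_const, true_and]
      constructor
      · intro h
        exact ⟨fun _ => trivial, h⟩
      · intro h
        exact h.2
    rw [hcount]
    have hmain := AlonRodl.main_ind G hreg hd hspec hlampos.le hn1 t Finset.univ
    have hφ := AlonRodl.phi_univ_le G d
    have hlogn : (0:ℝ) ≤ Real.log (Fintype.card V : ℝ) := Real.log_nonneg hn1
    have hrpow : (Fintype.card V : ℝ) ^ (AlonRodl.phi G d Finset.univ) ≤ Real.exp t := by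
      rw [Real.rpow_def_of_pos hn0]
      refine Real.exp_le_exp.2 ?_
      calc Real.log (Fintype.card V : ℝ) * AlonRodl.phi G d Finset.univ
          ≤ Real.log (Fintype.card V : ℝ)
            * (2 * (Fintype.card V : ℝ) * Real.log (Fintype.card V : ℝ) / d) :=
            mul_le_mul_of_nonneg_left hφ hlogn
        _ = 2 * (Fintype.card V : ℝ) * Real.log (Fintype.card V : ℝ) ^ 2 / d := by ring
        _ ≤ (t:ℝ) := htlarge
    have hbase : (0:ℝ) ≤ 2 * (lam * (Fintype.card V : ℝ) / d) + 1 := by positivity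
    have h2a1 : 2 * (lam * (Fintype.card V : ℝ) / d) + 1
        ≤ 3 * (lam * (Fintype.card V : ℝ) / d) := by linarith
    have hpow1 : (2 * (lam * (Fintype.card V : ℝ) / d) + 1) ^ t
        ≤ (3 * (lam * (Fintype.card V : ℝ) / d)) ^ t :=
      pow_le_pow_left₀ hbase h2a1 t
    have hexp : Real.exp t = Real.exp 1 ^ t := by
      rw [← Real.exp_one_pow]
    calc (AlonRodl.Nt G Finset.univ t : ℝ)
        ≤ (Fintype.card V : ℝ) ^ (AlonRodl.phi G d Finset.univ)
          * (2 * (lam * (Fintype.card V : ℝ) / d) + 1) ^ t := hmain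
      _ ≤ Real.exp t * (3 * (lam * (Fintype.card V : ℝ) / d)) ^ t := by
          refine mul_le_mul hrpow hpow1 (by positivity) (by positivity)
      _ = (Real.exp 1 * (3 * (lam * (Fintype.card V : ℝ) / d))) ^ t := by
          rw [hexp, ← mul_pow]
      _ ≤ (4 * Real.exp 1 * (Fintype.card V : ℝ) * lam / d) ^ t := by
          refine pow_le_pow_left₀ (by positivity) ?_ t
          have he1 : (0:ℝ) < Real.exp 1 := Real.exp_pos 1
          have ha0 : 0 ≤ lam * (Fintype.card V : ℝ) / d := by positivity
          have : Real.exp 1 * (3 * (lam * (Fintype.card V : ℝ) / d))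
              ≤ Real.exp 1 * (4 * (lam * (Fintype.card V : ℝ) / d)) := by
            refine mul_le_mul_of_nonneg_left ?_ he1.le
            linarith
          calc Real.exp 1 * (3 * (lam * (Fintype.card V : ℝ) / d)) ≤ _ := this
            _ = 4 * Real.exp 1 * (Fintype.card V : ℝ) * lam / d := by ring
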